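/- arXiv:2204.06730 — 9 statements merged into one kernel-verified Lean document; each statement's English description precedes it below -/
import Mathlib

section
/- (Persistence) Let ⟨g, W, ≤, V⟩ be an S-model for L⊃ with interpretation I. Then for every formula A of L⊃ and all w₁, w₂ ∈ W, if I(w₁, A) = 1 and w₁ ≤ w₂ then I(w₂, A) = 1. -/
/-- Formulas of the language L⊃ : propositional variables with ∧, ∨,
    intuitionistic → (`imp`) and classical ⊃ (`sup`). -/
inductive Formula : Type
  | var : ℕ → Formula
  | and : Formula → Formula → Formula
  | or  : Formula → Formula → Formula
  | imp : Formula → Formula → Formula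
  | sup : Formula → Formula → Formula

/-- An S-model ⟨g, W, ≤, V⟩. -/
structure SModel where
  W : Type
  le : W → W → Prop
  refl : ∀ w, le w w
  trans : ∀ u v w, le u v → le v w → le u w
  g : W
  least : ∀ w, le g w
  V : W → ℕ → Prop
  hered : ∀ w₁ w₂ p, V w₁ p → le w₁ w₂ → V w₂ p

/-- The interpretation I : `M.sat A w` means I(w, A) = 1. -/
def SModel.sat (M : SModel) : Formula → M.W → Prop
  | .var p, w => M.V w p
  | .and A B, w => M.sat A w ∧ M.sat B w
  | .or A B, w => M.sat A w ∨ M.sat B w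
  | .sup A B, w => ¬ M.sat A M.g ∨ M.sat B w
  | .imp A B, w => ∀ x, M.le w x → M.sat A x → M.sat B x

/-- Semantic consequence: Γ ⊨ A. -/
def SConseq (Γ : Set Formula) (A : Formula) : Prop :=
  ∀ M : SModel, (∀ B ∈ Γ, M.sat B M.g) → M.sat A M.g

/-- Persistence: if I(w₁,A)=1 and w₁ ≤ w₂ then I(w₂,A)=1, for every formula A of L⊃. -/
theorem persistence (M : SModel) (A : Formula) (w₁ w₂ : M.W)
    (h : M.sat A w₁) (hle : M.le w₁ w₂) : M.sat A w₂ := by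
  induction A generalizing w₁ w₂ with
  | var p => exact M.hered _ _ _ h hle
  | and A B ihA ihB => exact ⟨ihA _ _ h.1 hle, ihB _ _ h.2 hle⟩
  | or A B ihA ihB => exact h.imp (fun hA => ihA _ _ hA hle) (fun hB => ihB _ _ hB hle)
  | sup A B ihA ihB => exact h.imp id (fun hB => ihB _ _ hB hle)
  | imp A B ihA ihB => exact fun x hx hA => h x (M.trans _ _ _ hle hx) hA
end

section
/- (Non-definability of empirical negation) For every frame ⟨g, W, ≤⟩ (W a set, ≤ reflexive and transitive on W, g a least element) there is a valuation V making ⟨g, W, ≤, V⟩ an S-model such that there is no formula B of L⊃ in the single propositional variable p with the property that for every formula A and every w ∈ W, I(w, B[p/A]) = 1 iff I(g, A) ≠ 1 (where B[p/A] is the result of substituting A for p in B). In particular, the model with V(g,p)=1 for all p witnesses this. -/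
/-- Substitution of the formula A for the propositional variable p. -/
def Formula.subst (p : ℕ) (A : Formula) : Formula → Formula
  | .var q => if q = p then A else .var q
  | .and B C => (Formula.subst p A B).and (Formula.subst p A C)
  | .or B C => (Formula.subst p A B).or (Formula.subst p A C)
  | .imp B C => (Formula.subst p A B).imp (Formula.subst p A C)
  | .sup B C => (Formula.subst p A B).sup (Formula.subst p A C)

/-- B is a formula in the single propositional variable p. -/
def Formula.onlyVar (p : ℕ) : Formula → Prop
  | .var q => q = p
  | .and B C => Formula.onlyVar p B ∧ Formula.onlyVar p C
  | .or B C => Formula.onlyVar p B ∧ Formula.onlyVar p C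
  | .imp B C => Formula.onlyVar p B ∧ Formula.onlyVar p C
  | .sup B C => Formula.onlyVar p B ∧ Formula.onlyVar p C

lemma all_sat (M : SModel) (hV : ∀ w p, M.V w p) : ∀ A w, M.sat A w := by
  intro A
  induction A with
  | var p => intro w; exact hV w p
  | and B C ihB ihC => intro w; exact ⟨ihB w, ihC w⟩
  | or B C ihB ihC => intro w; exact Or.inl (ihB w)
  | imp B C ihB ihC => intro w x _ _; exact ihC x
  | sup B C ihB ihC => intro w; exact Or.inr (ihC w)

/-- Non-definability of empirical negation: for every frame ⟨g, W, ≤⟩ there is a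
valuation V making ⟨g, W, ≤, V⟩ an S-model (indeed, the one with V(g,p)=1 for
all p) such that no formula B in the single variable p satisfies:
for every formula A and every world w, I(w, B[p/A]) = 1 iff I(g, A) ≠ 1. -/
theorem empirical_negation_not_definable
    (W : Type) (le : W → W → Prop) (g : W)
    (refl : ∀ w, le w w) (trans : ∀ u v w, le u v → le v w → le u w)
    (least : ∀ w, le g w) :
    ∃ (V : W → ℕ → Prop)
      (hered : ∀ w₁ w₂ p, V w₁ p → le w₁ w₂ → V w₂ p),
      (∀ p : ℕ, V g p) ∧
      ∀ (p : ℕ) (B : Formula), B.onlyVar p →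
        ¬ (∀ (A : Formula) (w : W),
            (SModel.mk W le refl trans g least V hered).sat (Formula.subst p A B) w ↔
            ¬ (SModel.mk W le refl trans g least V hered).sat A g) := by
  refine ⟨fun _ _ => True, fun _ _ _ h _ => h, fun _ => trivial, ?_⟩
  intro p B _ h
  have hs := all_sat (SModel.mk W le refl trans g least (fun _ _ => True)
    (fun _ _ _ h _ => h)) (fun _ _ => trivial)
  exact ((h (.var p) g).mp (hs _ g)) (hs _ g)
end

section
/- In the Hilbert system S the following hold for all formulas A, B, C of L⊃ and all sets of formulas Γ: (MP2) if Γ ⊢ A and Γ ⊢ A→B then Γ ⊢ B; (MP3) ⊢ A⊃((A⊃B)→B); (Kmix) ⊢ A→(B⊃A); (K⊃) ⊢ A⊃(B⊃A); (S⊃) ⊢ (A⊃(B⊃C))⊃((A⊃B)⊃(A⊃C)); (C) ⊢ A∨(A⊃B). -/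
/-- The Hilbert system S : `SDeriv Γ A` means Γ ⊢ A. -/
inductive SDeriv : Set Formula → Formula → Prop
  | hyp {Γ A} : A ∈ Γ → SDeriv Γ A
  | ax1 {Γ} (A B : Formula) : SDeriv Γ (A.imp (B.imp A))
  | ax2 {Γ} (A B C : Formula) :
      SDeriv Γ ((A.imp (B.imp C)).imp ((A.imp B).imp (A.imp C)))
  | ax3 {Γ} (A B : Formula) : SDeriv Γ ((A.and B).imp A)
  | ax4 {Γ} (A B : Formula) : SDeriv Γ ((A.and B).imp B)
  | ax5 {Γ} (A B C : Formula) :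
      SDeriv Γ ((C.imp A).imp ((C.imp B).imp (C.imp (A.and B))))
  | ax6 {Γ} (A B : Formula) : SDeriv Γ (A.imp (A.or B))
  | ax7 {Γ} (A B : Formula) : SDeriv Γ (B.imp (A.or B))
  | ax8 {Γ} (A B C : Formula) :
      SDeriv Γ ((A.imp C).imp ((B.imp C).imp ((A.or B).imp C)))
  | axM1 {Γ} (A B : Formula) : SDeriv Γ ((A.imp B).sup (A.sup B))
  | axM2 {Γ} (A B C : Formula) :
      SDeriv Γ ((A.sup (B.sup C)).imp ((A.sup B).sup (A.sup C)))
  | axM3 {Γ} (A B C : Formula) :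
      SDeriv Γ ((A.sup (B.imp C)).imp (B.imp (A.sup C)))
  | axM4 {Γ} (A B C : Formula) :
      SDeriv Γ ((A.imp (B.sup C)).imp (B.sup (A.imp C)))
  | axM5 {Γ} (A B C : Formula) :
      SDeriv Γ (((A.sup B).sup C).imp ((A.sup C).imp C))
  | axM6 {Γ} (A B C : Formula) :
      SDeriv Γ ((A.sup C).imp ((B.sup C).imp ((A.or B).sup C)))
  | mp {Γ A B} : SDeriv Γ A → SDeriv Γ (A.sup B) → SDeriv Γ B

private theorem mp2' {Γ : Set Formula} {A B : Formula}
    (h : SDeriv Γ A) (hi : SDeriv Γ (A.imp B)) : SDeriv Γ B :=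
  SDeriv.mp h (SDeriv.mp hi (SDeriv.axM1 A B))

private theorem idI (Γ : Set Formula) (A : Formula) : SDeriv Γ (A.imp A) :=
  mp2' (SDeriv.ax1 A A) (mp2' (SDeriv.ax1 A (A.imp A)) (SDeriv.ax2 A (A.imp A) A))

private theorem supWeak {Γ : Set Formula} {A : Formula} (B : Formula)
    (h : SDeriv Γ A) : SDeriv Γ (B.sup A) :=
  SDeriv.mp (mp2' h (SDeriv.ax1 A B)) (SDeriv.axM1 B A)

private theorem kmix (Γ : Set Formula) (A B : Formula) :
    SDeriv Γ (A.imp (B.sup A)) :=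
  mp2' (supWeak B (idI Γ A)) (SDeriv.axM3 B A A)

/-- (MP2), (MP3), (Kmix), (K⊃), (S⊃) and (C) are derivable in S. -/
theorem derivable_rules_and_formulas :
    (∀ (Γ : Set Formula) (A B : Formula),
      SDeriv Γ A → SDeriv Γ (A.imp B) → SDeriv Γ B) ∧
    (∀ A B : Formula, SDeriv ∅ (A.sup ((A.sup B).imp B))) ∧
    (∀ A B : Formula, SDeriv ∅ (A.imp (B.sup A))) ∧
    (∀ A B : Formula, SDeriv ∅ (A.sup (B.sup A))) ∧
    (∀ A B C : Formula,
      SDeriv ∅ ((A.sup (B.sup C)).sup ((A.sup B).sup (A.sup C)))) ∧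
    (∀ A B : Formula, SDeriv ∅ (A.or (A.sup B))) := by
  refine ⟨fun Γ A B h hi => mp2' h hi, fun A B => ?_, fun A B => kmix ∅ A B,
    fun A B => SDeriv.mp (kmix ∅ A B) (SDeriv.axM1 A (B.sup A)),
    fun A B C => SDeriv.mp (SDeriv.axM2 A B C)
      (SDeriv.axM1 (A.sup (B.sup C)) ((A.sup B).sup (A.sup C))), fun A B => ?_⟩
  · exact mp2' (idI ∅ (A.sup B)) (SDeriv.axM4 (A.sup B) A B)
  · exact mp2'
      (SDeriv.mp (SDeriv.ax6 A (A.sup B)) (SDeriv.axM1 A (A.or (A.sup B))))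
      (mp2'
        (SDeriv.mp (SDeriv.ax7 A (A.sup B))
          (SDeriv.axM1 (A.sup B) (A.or (A.sup B))))
        (SDeriv.axM5 A B (A.or (A.sup B))))
end

section
/- (Deduction theorem) For all sets of formulas Γ and all formulas A, B of L⊃: Γ ∪ {A} ⊢ B if and only if Γ ⊢ A⊃B, where ⊢ is derivability in the Hilbert system S. -/
/-- From an `imp` theorem to a `sup` theorem, via AxM1 and MP. -/
theorem SDeriv.toSup {Γ} {X Y : Formula} (h : SDeriv Γ (X.imp Y)) :
    SDeriv Γ (X.sup Y) := h.mp (SDeriv.axM1 X Y)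

/-- Derived modus ponens for `imp`. -/
theorem SDeriv.mpI {Γ} {X Y : Formula} (h1 : SDeriv Γ X)
    (h2 : SDeriv Γ (X.imp Y)) : SDeriv Γ Y := h1.mp h2.toSup

theorem SDeriv.impSelf {Γ} (A : Formula) : SDeriv Γ (A.imp A) :=
  (SDeriv.ax1 A A).mpI
    ((SDeriv.ax1 A (A.imp A)).mpI (SDeriv.ax2 A (A.imp A) A))

theorem SDeriv.supSelf {Γ} (A : Formula) : SDeriv Γ (A.sup A) :=
  (SDeriv.impSelf A).toSup

/-- Weakening rule for `sup`. -/
theorem SDeriv.supK {Γ} {C : Formula} (A : Formula) (h : SDeriv Γ C) :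
    SDeriv Γ (A.sup C) := (h.mpI (SDeriv.ax1 C A)).toSup

/-- Monotonicity of derivability. -/
theorem SDeriv.mono {Γ Γ' : Set Formula} {X : Formula}
    (h : SDeriv Γ X) (hs : Γ ⊆ Γ') : SDeriv Γ' X := by
  induction h with
  | hyp hm => exact .hyp (hs hm)
  | mp _ _ ih1 ih2 => exact .mp ih1 ih2
  | ax1 => exact .ax1 _ _
  | ax2 => exact .ax2 _ _ _
  | ax3 => exact .ax3 _ _
  | ax4 => exact .ax4 _ _
  | ax5 => exact .ax5 _ _ _
  | ax6 => exact .ax6 _ _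
  | ax7 => exact .ax7 _ _
  | ax8 => exact .ax8 _ _ _
  | axM1 => exact .axM1 _ _
  | axM2 => exact .axM2 _ _ _
  | axM3 => exact .axM3 _ _ _
  | axM4 => exact .axM4 _ _ _
  | axM5 => exact .axM5 _ _ _
  | axM6 => exact .axM6 _ _ _

/-- Deduction theorem: Γ ∪ {A} ⊢ B iff Γ ⊢ A ⊃ B. -/
theorem deduction_theorem (Γ : Set Formula) (A B : Formula) :
    SDeriv (Γ ∪ {A}) B ↔ SDeriv Γ (A.sup B) := by
  constructor
  · intro h
    induction h with
    | @hyp C hm =>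
      rcases hm with hm | hm
      · exact SDeriv.supK A (.hyp hm)
      · cases hm; exact SDeriv.supSelf _
    | @mp C D _ _ ih1 ih2 =>
      exact ih1.mp (ih2.mpI (SDeriv.axM2 A C D))
    | ax1 => exact SDeriv.supK A (.ax1 _ _)
    | ax2 => exact SDeriv.supK A (.ax2 _ _ _)
    | ax3 => exact SDeriv.supK A (.ax3 _ _)
    | ax4 => exact SDeriv.supK A (.ax4 _ _)
    | ax5 => exact SDeriv.supK A (.ax5 _ _ _)
    | ax6 => exact SDeriv.supK A (.ax6 _ _)
    | ax7 => exact SDeriv.supK A (.ax7 _ _)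
    | ax8 => exact SDeriv.supK A (.ax8 _ _ _)
    | axM1 => exact SDeriv.supK A (.axM1 _ _)
    | axM2 => exact SDeriv.supK A (.axM2 _ _ _)
    | axM3 => exact SDeriv.supK A (.axM3 _ _ _)
    | axM4 => exact SDeriv.supK A (.axM4 _ _ _)
    | axM5 => exact SDeriv.supK A (.axM5 _ _ _)
    | axM6 => exact SDeriv.supK A (.axM6 _ _ _)
  · intro h
    exact (SDeriv.hyp (by simp : A ∈ Γ ∪ {A})).mp
      (h.mono (Set.subset_union_left))
end

section
/- (Failure of the deduction theorem for →) For distinct propositional variables p and q, the formula (p⊃q)→(p→q) is not a theorem of the Hilbert system S, i.e. it is not the case that ⊢ (p⊃q)→(p→q). -/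
/-- Heyting implication on the 3-chain. -/
def fimp (x y : Fin 3) : Fin 3 := if x ≤ y then 2 else y

/-- The "classical" conditional of the countermatrix. -/
def fsup (x y : Fin 3) : Fin 3 := if x = 2 then y else 2

/-- Evaluation of formulas in the 3-valued countermatrix. -/
def ev (v : ℕ → Fin 3) : Formula → Fin 3
  | Formula.var n => v n
  | Formula.and A B => min (ev v A) (ev v B)
  | Formula.or A B => max (ev v A) (ev v B)
  | Formula.imp A B => fimp (ev v A) (ev v B)
  | Formula.sup A B => fsup (ev v A) (ev v B)

theorem soundness_s4 (v : ℕ → Fin 3) {Γ : Set Formula} {A : Formula}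
    (h : SDeriv Γ A) (hΓ : ∀ B ∈ Γ, ev v B = 2) : ev v A = 2 := by
  induction h with
  | hyp hmem => exact hΓ _ hmem
  | mp _ _ ihA ihAB =>
      rename_i A B _ _
      simp only [ev] at ihAB
      rw [ihA, fsup] at ihAB
      simpa using ihAB
  | ax1 A B =>
      exact (by decide : ∀ a b : Fin 3, fimp a (fimp b a) = 2) _ _
  | ax2 A B C =>
      exact (by decide : ∀ a b c : Fin 3,
        fimp (fimp a (fimp b c)) (fimp (fimp a b) (fimp a c)) = 2) _ _ _
  | ax3 A B =>
      exact (by decide : ∀ a b : Fin 3, fimp (min a b) a = 2) _ _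
  | ax4 A B =>
      exact (by decide : ∀ a b : Fin 3, fimp (min a b) b = 2) _ _
  | ax5 A B C =>
      exact (by decide : ∀ a b c : Fin 3,
        fimp (fimp c a) (fimp (fimp c b) (fimp c (min a b))) = 2) _ _ _
  | ax6 A B =>
      exact (by decide : ∀ a b : Fin 3, fimp a (max a b) = 2) _ _
  | ax7 A B =>
      exact (by decide : ∀ a b : Fin 3, fimp b (max a b) = 2) _ _
  | ax8 A B C =>
      exact (by decide : ∀ a b c : Fin 3,
        fimp (fimp a c) (fimp (fimp b c) (fimp (max a b) c)) = 2) _ _ _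
  | axM1 A B =>
      exact (by decide : ∀ a b : Fin 3, fsup (fimp a b) (fsup a b) = 2) _ _
  | axM2 A B C =>
      exact (by decide : ∀ a b c : Fin 3,
        fimp (fsup a (fsup b c)) (fsup (fsup a b) (fsup a c)) = 2) _ _ _
  | axM3 A B C =>
      exact (by decide : ∀ a b c : Fin 3,
        fimp (fsup a (fimp b c)) (fimp b (fsup a c)) = 2) _ _ _
  | axM4 A B C =>
      exact (by decide : ∀ a b c : Fin 3,
        fimp (fimp a (fsup b c)) (fsup b (fimp a c)) = 2) _ _ _
  | axM5 A B C =>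
      exact (by decide : ∀ a b c : Fin 3,
        fimp (fsup (fsup a b) c) (fimp (fsup a c) c) = 2) _ _ _
  | axM6 A B C =>
      exact (by decide : ∀ a b c : Fin 3,
        fimp (fsup a c) (fimp (fsup b c) (fsup (max a b) c)) = 2) _ _ _

/-- Failure of the deduction theorem for → : (p⊃q)→(p→q) is not a theorem of S. -/
theorem deduction_theorem_fails_for_imp (p q : ℕ) (hpq : p ≠ q) :
    ¬ SDeriv ∅ (((Formula.var p).sup (Formula.var q)).imp
        ((Formula.var p).imp (Formula.var q))) := by
  intro h
  have := soundness_s4 (fun n => if n = p then 1 else 0) h (by simp)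
  simp only [ev, if_pos rfl, if_neg (Ne.symm hpq)] at this
  revert this
  decide
end

section
/- (Soundness of S) For every set of formulas Γ and every formula A of L⊃: if Γ ⊢ A in the Hilbert system S, then Γ ⊨ A with respect to S-models. -/
/-- Heredity extends from variables to all formulas. -/
lemma sat_mono (M : SModel) : ∀ (A : Formula) (w₁ w₂ : M.W),
    M.le w₁ w₂ → M.sat A w₁ → M.sat A w₂ := by
  intro A
  induction A with
  | var p => intro w₁ w₂ h hs; exact M.hered _ _ _ hs h
  | and A B ihA ihB => intro w₁ w₂ h hs; exact ⟨ihA _ _ h hs.1, ihB _ _ h hs.2⟩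
  | or A B ihA ihB =>
      intro w₁ w₂ h hs
      rcases hs with hs | hs
      · exact Or.inl (ihA _ _ h hs)
      · exact Or.inr (ihB _ _ h hs)
  | sup A B ihA ihB =>
      intro w₁ w₂ h hs
      rcases hs with hs | hs
      · exact Or.inl hs
      · exact Or.inr (ihB _ _ h hs)
  | imp A B ihA ihB =>
      intro w₁ w₂ h hs x hx hA
      exact hs x (M.trans _ _ _ h hx) hA

/-- Soundness of S: if Γ ⊢ A then Γ ⊨ A. -/
theorem soundness (Γ : Set Formula) (A : Formula)
    (h : SDeriv Γ A) : SConseq Γ A := by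
  induction h with
  | hyp hA => intro M hΓ; exact hΓ _ hA
  | ax1 A B =>
      intro M _ x _ hA y hy _
      exact sat_mono M A _ _ hy hA
  | ax2 A B C =>
      intro M _ x _ h1 y hy h2 z hz hA
      exact h1 z (M.trans _ _ _ hy hz) hA z (M.refl z) (h2 z hz hA)
  | ax3 A B => intro M _ x _ hs; exact hs.1
  | ax4 A B => intro M _ x _ hs; exact hs.2
  | ax5 A B C =>
      intro M _ x _ h1 y hy h2 z hz hC
      exact ⟨h1 z (M.trans _ _ _ hy hz) hC, h2 z hz hC⟩
  | ax6 A B => intro M _ x _ hA; exact Or.inl hA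
  | ax7 A B => intro M _ x _ hB; exact Or.inr hB
  | ax8 A B C =>
      intro M _ x _ h1 y hy h2 z hz hAB
      rcases hAB with hA | hB
      · exact h1 z (M.trans _ _ _ hy hz) hA
      · exact h2 z hz hB
  | axM1 A B =>
      intro M _
      by_cases hAB : M.sat (A.imp B) M.g
      · by_cases hA : M.sat A M.g
        · exact Or.inr (Or.inr (hAB M.g (M.refl _) hA))
        · exact Or.inr (Or.inl hA)
      · exact Or.inl hAB
  | axM2 A B C =>
      intro M _ x _ h1
      rcases h1 with hA | h1
      · exact Or.inr (Or.inl hA)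
      · rcases h1 with hB | hC
        · by_cases hA : M.sat A M.g
          · exact Or.inl (fun h => h.elim (fun hnA => hnA hA) hB)
          · exact Or.inr (Or.inl hA)
        · exact Or.inr (Or.inr hC)
  | axM3 A B C =>
      intro M _ x _ h1 y hy hB
      rcases h1 with hA | h2
      · exact Or.inl hA
      · exact Or.inr (h2 y hy hB)
  | axM4 A B C =>
      intro M _ x _ h1
      by_cases hB : M.sat B M.g
      · refine Or.inr (fun y hy hA => ?_)
        rcases h1 y hy hA with h | hC
        · exact absurd hB h
        · exact hC
      · exact Or.inl hB
  | axM5 A B C =>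
      intro M _ x _ h1 y hy h2
      rcases h1 with h1 | hC
      · have hA : M.sat A M.g := by
          by_contra hA; exact h1 (Or.inl hA)
        rcases h2 with h2 | hC
        · exact absurd hA h2
        · exact hC
      · exact sat_mono M C _ _ hy hC
  | axM6 A B C =>
      intro M _ x _ h1 y hy h2
      rcases h1 with hA | hC
      · rcases h2 with hB | hC
        · exact Or.inl (fun h => h.elim hA hB)
        · exact Or.inr hC
      · exact Or.inr (sat_mono M C _ _ hy hC)
  | mp hA hAB ihA ihAB =>
      intro M hΓ
      rcases ihAB M hΓ with h | hB
      · exact absurd (ihA M hΓ) h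
      · exact hB
end

section
/- If Σ is prime and Π-deductively closed (with respect to derivability in the Hilbert system S over L⊃) and A ∉ Σ, then A⊃B ∈ Σ for every formula B. -/
/-- `PiTheory P S` : S is a P-theory (clauses (a) and (b)), where ⊢_P is
    derivability in S from the extra assumptions P. -/
def PiTheory (P S : Set Formula) : Prop :=
  (∀ A B : Formula, A ∈ S → B ∈ S → Formula.and A B ∈ S) ∧
  (∀ A B : Formula, SDeriv P (A.imp B) → A ∈ S → B ∈ S)

/-- S is prime. -/
def IsPrimeSet (S : Set Formula) : Prop :=
  ∀ A B : Formula, Formula.or A B ∈ S → A ∈ S ∨ B ∈ S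

/-- Conjunction A ∧ B₁ ∧ ⋯ ∧ Bₙ of a nonempty list. -/
def conjFold : Formula → List Formula → Formula
  | A, [] => A
  | A, B :: L => A.and (conjFold B L)

/-- Disjunction A ∨ B₁ ∨ ⋯ ∨ Bₙ of a nonempty list. -/
def disjFold : Formula → List Formula → Formula
  | A, [] => A
  | A, B :: L => A.or (disjFold B L)

/-- `SeqDeriv P S D` : Σ ⊢_Π Δ, i.e. Σ∪Π ⊢ D₁ ∨ ⋯ ∨ Dₙ for some D₁,…,Dₙ ∈ Δ. -/
def SeqDeriv (P S D : Set Formula) : Prop :=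
  ∃ (D₀ : Formula) (Ds : List Formula), D₀ ∈ D ∧ (∀ X ∈ Ds, X ∈ D) ∧
    SDeriv (S ∪ P) (disjFold D₀ Ds)

/-- `ImpDeriv P S D` : ⊢_Π Σ→Δ, i.e. ⊢_Π (C₁∧⋯∧Cₙ)→(D₁∨⋯∨Dₘ)
    for some C₁,…,Cₙ ∈ Σ and D₁,…,Dₘ ∈ Δ. -/
def ImpDeriv (P S D : Set Formula) : Prop :=
  ∃ (C₀ : Formula) (Cs : List Formula) (D₀ : Formula) (Ds : List Formula),
    C₀ ∈ S ∧ (∀ X ∈ Cs, X ∈ S) ∧ D₀ ∈ D ∧ (∀ X ∈ Ds, X ∈ D) ∧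
    SDeriv P ((conjFold C₀ Cs).imp (disjFold D₀ Ds))

/-- ⟨Σ,Δ⟩ is a Π-partition. -/
def PiPartition (P S D : Set Formula) : Prop :=
  S ∪ D = Set.univ ∧ ¬ ImpDeriv P S D

/-- S is P-deductively closed. -/
def PiDedClosed (P S : Set Formula) : Prop :=
  ∀ A : Formula, SDeriv (S ∪ P) A → A ∈ S

/-- Modus ponens for the intuitionistic conditional, via AxM1. -/
theorem SDeriv.mpImp {G : Set Formula} {A B : Formula}
    (h1 : SDeriv G A) (h2 : SDeriv G (A.imp B)) : SDeriv G B :=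
  .mp h1 (.mp h2 (.axM1 A B))

/-- If Σ is prime, Π-deductively closed and A ∉ Σ, then A ⊃ B ∈ Σ for every B. -/
theorem sup_mem_of_not_mem (P S : Set Formula) (A : Formula)
    (hp : IsPrimeSet S) (hd : PiDedClosed P S) (hA : A ∉ S) :
    ∀ B : Formula, A.sup B ∈ S := by
  intro B
  set C : Formula := (A.sup B).or A with hC
  have h1 : SDeriv (S ∪ P) ((A.sup B).sup C) :=
    .mp (.ax6 (A.sup B) A) (.axM1 _ _)
  have h2 : SDeriv (S ∪ P) (A.sup C) :=
    .mp (.ax7 (A.sup B) A) (.axM1 _ _)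
  have h3 : SDeriv (S ∪ P) C :=
    SDeriv.mpImp h2 (SDeriv.mpImp h1 (.axM5 A B C))
  rcases hp _ _ (hd C h3) with h | h
  · exact h
  · exact absurd h hA
end

section
/- (Strong completeness of S) For every set of formulas Γ and every formula A of L⊃: if Γ ⊨ A with respect to S-models, then Γ ⊢ A in the Hilbert system S. -/
namespace CompletenessProof
open Formula

/-! ### Basic derived rules for SDeriv -/

theorem derivMono {Γ Δ : Set Formula} {A : Formula} (h : SDeriv Γ A) (hs : Γ ⊆ Δ) :
    SDeriv Δ A := by
  induction h with
  | hyp hA => exact .hyp (hs hA)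
  | mp _ _ ih1 ih2 => exact .mp ih1 ih2
  | ax1 A B => exact .ax1 A B
  | ax2 A B C => exact .ax2 A B C
  | ax3 A B => exact .ax3 A B
  | ax4 A B => exact .ax4 A B
  | ax5 A B C => exact .ax5 A B C
  | ax6 A B => exact .ax6 A B
  | ax7 A B => exact .ax7 A B
  | ax8 A B C => exact .ax8 A B C
  | axM1 A B => exact .axM1 A B
  | axM2 A B C => exact .axM2 A B C
  | axM3 A B C => exact .axM3 A B C
  | axM4 A B C => exact .axM4 A B C
  | axM5 A B C => exact .axM5 A B C
  | axM6 A B C => exact .axM6 A B C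

/-- From a proved intuitionistic conditional get the classical one (via AxM1). -/
theorem impToSup {Γ : Set Formula} {A B : Formula} (h : SDeriv Γ (A.imp B)) :
    SDeriv Γ (A.sup B) := .mp h (.axM1 A B)

/-- Modus ponens for the intuitionistic conditional. -/
theorem mpImp {Γ : Set Formula} {A B : Formula} (h : SDeriv Γ (A.imp B))
    (ha : SDeriv Γ A) : SDeriv Γ B := .mp ha (impToSup h)

theorem impId {Γ : Set Formula} (A : Formula) : SDeriv Γ (A.imp A) :=
  mpImp (mpImp (.ax2 A (A.imp A) A) (.ax1 A (A.imp A))) (.ax1 A A)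

theorem supIntro {Γ : Set Formula} {B : Formula} (A : Formula) (h : SDeriv Γ B) :
    SDeriv Γ (A.sup B) := impToSup (mpImp (.ax1 B A) h)

theorem dedSup_aux {Δ : Set Formula} {B : Formula} (h : SDeriv Δ B) :
    ∀ (Γ : Set Formula) (A : Formula), Δ = insert A Γ → SDeriv Γ (A.sup B) := by
  induction h with
  | hyp hB =>
    intro Γ A hΔ
    subst hΔ
    rcases hB with rfl | h
    · exact impToSup (impId _)
    · exact supIntro A (.hyp h)
  | mp _ _ ih1 ih2 =>
    intro Γ A hΔ
    exact .mp (ih1 Γ A hΔ) (mpImp (.axM2 _ _ _) (ih2 Γ A hΔ))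
  | ax1 X Y => exact fun Γ A _ => supIntro A (.ax1 X Y)
  | ax2 X Y Z => exact fun Γ A _ => supIntro A (.ax2 X Y Z)
  | ax3 X Y => exact fun Γ A _ => supIntro A (.ax3 X Y)
  | ax4 X Y => exact fun Γ A _ => supIntro A (.ax4 X Y)
  | ax5 X Y Z => exact fun Γ A _ => supIntro A (.ax5 X Y Z)
  | ax6 X Y => exact fun Γ A _ => supIntro A (.ax6 X Y)
  | ax7 X Y => exact fun Γ A _ => supIntro A (.ax7 X Y)
  | ax8 X Y Z => exact fun Γ A _ => supIntro A (.ax8 X Y Z)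
  | axM1 X Y => exact fun Γ A _ => supIntro A (.axM1 X Y)
  | axM2 X Y Z => exact fun Γ A _ => supIntro A (.axM2 X Y Z)
  | axM3 X Y Z => exact fun Γ A _ => supIntro A (.axM3 X Y Z)
  | axM4 X Y Z => exact fun Γ A _ => supIntro A (.axM4 X Y Z)
  | axM5 X Y Z => exact fun Γ A _ => supIntro A (.axM5 X Y Z)
  | axM6 X Y Z => exact fun Γ A _ => supIntro A (.axM6 X Y Z)

/-- Deduction theorem for ⊃. -/
theorem dedSup {Γ : Set Formula} {A B : Formula} (h : SDeriv (insert A Γ) B) :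
    SDeriv Γ (A.sup B) := dedSup_aux h Γ A rfl

/-- `⊢ C → (B ⊃ C)` (uses AxM3). -/
theorem impSupSelf {Γ : Set Formula} (B C : Formula) :
    SDeriv Γ (C.imp (B.sup C)) :=
  mpImp (.axM3 B C C) (dedSup (impId C))

/-- Compactness over unions of chains. -/
theorem deriv_sUnion {c : Set (Set Formula)} (hc : IsChain (· ⊆ ·) c)
    (hne : c.Nonempty) {B : Formula} (h : SDeriv (⋃₀ c) B) :
    ∃ t ∈ c, SDeriv t B := by
  induction h with
  | hyp hB =>
    rcases hB with ⟨t, ht, hBt⟩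
    exact ⟨t, ht, .hyp hBt⟩
  | mp _ _ ih1 ih2 =>
    rcases ih1 with ⟨t1, ht1, h1⟩
    rcases ih2 with ⟨t2, ht2, h2⟩
    rcases hc.total ht1 ht2 with hsub | hsub
    · exact ⟨t2, ht2, .mp (derivMono h1 hsub) h2⟩
    · exact ⟨t1, ht1, .mp h1 (derivMono h2 hsub)⟩
  | ax1 X Y => exact ⟨hne.choose, hne.choose_spec, .ax1 X Y⟩
  | ax2 X Y Z => exact ⟨hne.choose, hne.choose_spec, .ax2 X Y Z⟩
  | ax3 X Y => exact ⟨hne.choose, hne.choose_spec, .ax3 X Y⟩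
  | ax4 X Y => exact ⟨hne.choose, hne.choose_spec, .ax4 X Y⟩
  | ax5 X Y Z => exact ⟨hne.choose, hne.choose_spec, .ax5 X Y Z⟩
  | ax6 X Y => exact ⟨hne.choose, hne.choose_spec, .ax6 X Y⟩
  | ax7 X Y => exact ⟨hne.choose, hne.choose_spec, .ax7 X Y⟩
  | ax8 X Y Z => exact ⟨hne.choose, hne.choose_spec, .ax8 X Y Z⟩
  | axM1 X Y => exact ⟨hne.choose, hne.choose_spec, .axM1 X Y⟩
  | axM2 X Y Z => exact ⟨hne.choose, hne.choose_spec, .axM2 X Y Z⟩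
  | axM3 X Y Z => exact ⟨hne.choose, hne.choose_spec, .axM3 X Y Z⟩
  | axM4 X Y Z => exact ⟨hne.choose, hne.choose_spec, .axM4 X Y Z⟩
  | axM5 X Y Z => exact ⟨hne.choose, hne.choose_spec, .axM5 X Y Z⟩
  | axM6 X Y Z => exact ⟨hne.choose, hne.choose_spec, .axM6 X Y Z⟩

/-! ### Relativized derivability for non-root worlds -/

/-- Derivability at a world of the canonical model over root theory `G`:
modus ponens for →, and modus ponens for ⊃ whose minor premise holds at `G`. -/
inductive DD (G : Set Formula) : Set Formula → Formula → Prop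
  | hyp {T B} : B ∈ T → DD G T B
  | mpI {T A B} : DD G T A → DD G T (A.imp B) → DD G T B
  | mpS {T A B} : A ∈ G → DD G T (A.sup B) → DD G T B

theorem DD.mono {G T U : Set Formula} {B : Formula} (h : DD G T B) (hs : T ⊆ U) :
    DD G U B := by
  induction h with
  | hyp hB => exact .hyp (hs hB)
  | mpI _ _ ih1 ih2 => exact .mpI ih1 ih2
  | mpS hA _ ih => exact .mpS hA ih

theorem DD.cut_aux {G S : Set Formula} {B : Formula} (h2 : DD G S B) :
    ∀ (T : Set Formula) (A : Formula), S = insert A T → DD G T A → DD G T B := by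
  induction h2 with
  | hyp hB =>
    intro T A hS h1
    subst hS
    rcases hB with rfl | h
    · exact h1
    · exact .hyp h
  | mpI _ _ ih1 ih2 =>
    intro T A hS h1
    exact .mpI (ih1 T A hS h1) (ih2 T A hS h1)
  | mpS hA _ ih =>
    intro T A hS h1
    exact .mpS hA (ih T A hS h1)

theorem DD.cut {G T : Set Formula} {A B : Formula} (h2 : DD G (insert A T) B)
    (h1 : DD G T A) : DD G T B := DD.cut_aux h2 T A rfl h1

theorem dd_sUnion {G : Set Formula} {c : Set (Set Formula)} (hc : IsChain (· ⊆ ·) c)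
    (hne : c.Nonempty) {B : Formula} (h : DD G (⋃₀ c) B) :
    ∃ t ∈ c, DD G t B := by
  induction h with
  | hyp hB =>
    rcases hB with ⟨t, ht, hBt⟩
    exact ⟨t, ht, .hyp hBt⟩
  | mpI _ _ ih1 ih2 =>
    rcases ih1 with ⟨t1, ht1, h1⟩
    rcases ih2 with ⟨t2, ht2, h2⟩
    rcases hc.total ht1 ht2 with hsub | hsub
    · exact ⟨t2, ht2, .mpI (h1.mono hsub) h2⟩
    · exact ⟨t1, ht1, .mpI h1 (h2.mono hsub)⟩
  | mpS hA _ ih =>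
    rcases ih with ⟨t, ht, h⟩
    exact ⟨t, ht, .mpS hA h⟩

/-- A world of the canonical model over `G`. -/
structure IsWorld (G T : Set Formula) : Prop where
  sub : G ⊆ T
  closed : ∀ B, DD G T B → B ∈ T
  prime : ∀ B C, B.or C ∈ T → B ∈ T ∨ C ∈ T

/-- Theorems of the (deductively closed) root theory belong to every superset. -/
theorem thmMem {G : Set Formula} (hG : ∀ B, SDeriv G B → B ∈ G)
    {T : Set Formula} (hsub : G ⊆ T) {X : Formula}
    (hx : SDeriv G X) : X ∈ T := hsub (hG X hx)

theorem dd_ded_aux {G S : Set Formula} {C : Formula}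
    (hG : ∀ B, SDeriv G B → B ∈ G) (h : DD G S C) :
    ∀ (T : Set Formula) (B : Formula), S = insert B T → G ⊆ T →
      (∀ X, DD G T X → X ∈ T) → B.imp C ∈ T := by
  induction h with
  | hyp hC =>
    intro T B hS hsub hcl
    subst hS
    rcases hC with rfl | h
    · exact thmMem hG hsub (impId _)
    · exact hcl _ (.mpI (.hyp h) (.hyp (thmMem hG hsub (.ax1 _ B))))
  | @mpI X Y _ _ ih1 ih2 =>
    intro T B hS hsub hcl
    have h1 := ih1 T B hS hsub hcl
    have h2 := ih2 T B hS hsub hcl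
    have hax : (B.imp (X.imp Y)).imp ((B.imp X).imp (B.imp Y)) ∈ T :=
      thmMem hG hsub (.ax2 B X Y)
    exact hcl _ (.mpI (.hyp h1) (.mpI (.hyp h2) (.hyp hax)))
  | @mpS X Y hX _ ih =>
    intro T B hS hsub hcl
    have h1 := ih T B hS hsub hcl
    have hax : (B.imp (X.sup Y)).imp (X.sup (B.imp Y)) ∈ T :=
      thmMem hG hsub (.axM4 B X Y)
    have h2 : X.sup (B.imp Y) ∈ T := hcl _ (.mpI (.hyp h1) (.hyp hax))
    exact hcl _ (.mpS hX (.hyp h2))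

/-- Deduction theorem for `DD`. -/
theorem dd_ded {G T : Set Formula} {B C : Formula}
    (hG : ∀ B, SDeriv G B → B ∈ G) (hsub : G ⊆ T)
    (hcl : ∀ X, DD G T X → X ∈ T) (h : DD G (insert B T) C) : B.imp C ∈ T :=
  dd_ded_aux hG h T B rfl hsub hcl

/-- Lindenbaum-style extension for `DD`: extend `T₀` to a world avoiding `C`. -/
theorem dd_lindenbaum {G T₀ : Set Formula} {C : Formula}
    (hG : ∀ B, SDeriv G B → B ∈ G) (hsub : G ⊆ T₀)
    (hnd : ¬ DD G T₀ C) :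
    ∃ U, T₀ ⊆ U ∧ IsWorld G U ∧ C ∉ U := by
  set S : Set (Set Formula) := {U | T₀ ⊆ U ∧ ¬ DD G U C} with hS
  obtain ⟨M, hTM, hMS⟩ :
      ∃ M, T₀ ⊆ M ∧ Maximal (· ∈ S) M := by
    refine zorn_subset_nonempty S ?_ T₀ ⟨subset_rfl, hnd⟩
    intro c hcS hc hne
    refine ⟨⋃₀ c, ⟨?_, ?_⟩, fun s hs => Set.subset_sUnion_of_mem hs⟩
    · rcases hne with ⟨t, ht⟩
      exact (hcS ht).1.trans (Set.subset_sUnion_of_mem ht)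
    · intro hd
      rcases dd_sUnion hc hne hd with ⟨t, ht, hdt⟩
      exact (hcS ht).2 hdt
  have hGM : G ⊆ M := hsub.trans hTM
  have hnC : ¬ DD G M C := hMS.1.2
  -- everything outside M leads (with M) to C
  have hout : ∀ B, B ∉ M → DD G (insert B M) C := by
    intro B hB
    by_contra hnd'
    have hmem : insert B M ∈ S := ⟨hTM.trans (Set.subset_insert B M), hnd'⟩
    have := hMS.2 hmem (Set.subset_insert B M)
    exact hB (this (Set.mem_insert B M))
  have hcl : ∀ B, DD G M B → B ∈ M := by
    intro B hd
    by_contra hB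
    exact hnC ((hout B hB).cut hd)
  refine ⟨M, hTM, ⟨hGM, hcl, ?_⟩, fun hC => hnC (.hyp hC)⟩
  intro X Y hXY
  by_contra hcon
  push_neg at hcon
  have hX : X.imp C ∈ M := dd_ded hG hGM hcl (hout X hcon.1)
  have hY : Y.imp C ∈ M := dd_ded hG hGM hcl (hout Y hcon.2)
  have hax : (X.imp C).imp ((Y.imp C).imp ((X.or Y).imp C)) ∈ M :=
    thmMem hG hGM (.ax8 X Y C)
  have : DD G M C :=
    .mpI (.hyp hXY) (.mpI (.hyp hY) (.mpI (.hyp hX) (.hyp hax)))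
  exact hnC this

/-! ### The canonical model and the truth lemma -/

/-- The canonical model over a root theory `G`. -/
noncomputable def canonModel (G : Set Formula) (hGw : IsWorld G G) : SModel where
  W := {T : Set Formula // IsWorld G T}
  le T U := T.1 ⊆ U.1
  refl _ := subset_rfl
  trans _ _ _ h1 h2 := h1.trans h2
  g := ⟨G, hGw⟩
  least T := T.2.sub
  V T p := Formula.var p ∈ T.1
  hered _ _ _ hp hsub := hsub hp

theorem truth_lemma {G : Set Formula} (hG : ∀ B, SDeriv G B → B ∈ G)
    (hGw : IsWorld G G)
    (hGsup : ∀ B C : Formula, B ∈ G ∨ B.sup C ∈ G) :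
    ∀ (B : Formula) (T : (canonModel G hGw).W),
      (canonModel G hGw).sat B T ↔ B ∈ T.1 := by
  intro B
  induction B with
  | var p => intro T; exact Iff.rfl
  | and X Y ihX ihY =>
    intro T
    constructor
    · rintro ⟨hX, hY⟩
      have hX := (ihX T).1 hX
      have hY := (ihY T).1 hY
      -- pair: use Ax5 with antecedent X.imp X
      have h1 : (X.imp X).imp X ∈ T.1 :=
        T.2.closed _ (.mpI (.hyp hX) (.hyp (thmMem hG T.2.sub (.ax1 X (X.imp X)))))
      have h2 : (X.imp X).imp Y ∈ T.1 :=
        T.2.closed _ (.mpI (.hyp hY) (.hyp (thmMem hG T.2.sub (.ax1 Y (X.imp X)))))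
      have hax : ((X.imp X).imp X).imp (((X.imp X).imp Y).imp ((X.imp X).imp (X.and Y))) ∈ T.1 :=
        thmMem hG T.2.sub (.ax5 X Y (X.imp X))
      have h3 : (X.imp X).imp (X.and Y) ∈ T.1 :=
        T.2.closed _ (.mpI (.hyp h2) (.mpI (.hyp h1) (.hyp hax)))
      exact T.2.closed _ (.mpI (.hyp (thmMem hG T.2.sub (impId X))) (.hyp h3))
    · intro hXY
      constructor
      · exact (ihX T).2 (T.2.closed _ (.mpI (.hyp hXY) (.hyp (thmMem hG T.2.sub (.ax3 X Y)))))
      · exact (ihY T).2 (T.2.closed _ (.mpI (.hyp hXY) (.hyp (thmMem hG T.2.sub (.ax4 X Y)))))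
  | or X Y ihX ihY =>
    intro T
    constructor
    · rintro (hX | hY)
      · exact T.2.closed _ (.mpI (.hyp ((ihX T).1 hX)) (.hyp (thmMem hG T.2.sub (.ax6 X Y))))
      · exact T.2.closed _ (.mpI (.hyp ((ihY T).1 hY)) (.hyp (thmMem hG T.2.sub (.ax7 X Y))))
    · intro hXY
      rcases T.2.prime X Y hXY with h | h
      · exact Or.inl ((ihX T).2 h)
      · exact Or.inr ((ihY T).2 h)
  | imp X Y ihX ihY =>
    intro T
    constructor
    · intro hsat
      by_contra hmem
      have hnd : ¬ DD G (insert X T.1) Y := fun hd => hmem (dd_ded hG T.2.sub T.2.closed hd)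
      obtain ⟨U, hTU, hUw, hYU⟩ :=
        dd_lindenbaum hG (T.2.sub.trans (Set.subset_insert X T.1)) hnd
      have hXU : X ∈ U := hTU (Set.mem_insert X T.1)
      have hle : T.1 ⊆ U := (Set.subset_insert X T.1).trans hTU
      have := hsat ⟨U, hUw⟩ hle ((ihX ⟨U, hUw⟩).2 hXU)
      exact hYU ((ihY ⟨U, hUw⟩).1 this)
    · intro hmem U hle hXU
      have hXU' : X ∈ U.1 := (ihX U).1 hXU
      exact (ihY U).2 (U.2.closed _ (.mpI (.hyp hXU') (.hyp (hle hmem))))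
  | sup X Y ihX ihY =>
    intro T
    constructor
    · rintro (hX | hY)
      · have hXg : X ∉ G := fun h => hX ((ihX ⟨G, hGw⟩).2 h)
        rcases hGsup X Y with h | h
        · exact absurd h hXg
        · exact T.2.sub h
      · have hY := (ihY T).1 hY
        exact T.2.closed _ (.mpI (.hyp hY) (.hyp (thmMem hG T.2.sub (impSupSelf X Y))))
    · intro hmem
      by_cases hXg : X ∈ G
      · exact Or.inr ((ihY T).2 (T.2.closed _ (.mpS hXg (.hyp hmem))))
      · exact Or.inl (fun h => hXg ((ihX ⟨G, hGw⟩).1 h))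

end CompletenessProof

/-- Strong completeness of S: if Γ ⊨ A then Γ ⊢ A. -/
theorem completeness (Γ : Set Formula) (A : Formula)
    (h : SConseq Γ A) : SDeriv Γ A := by
  classical
  by_contra hna
  -- Extend Γ to a theory G maximally avoiding A
  obtain ⟨G, hΓG, hGS⟩ :=
    zorn_subset_nonempty {Δ : Set Formula | Γ ⊆ Δ ∧ ¬ SDeriv Δ A}
      (by
        intro c hcS hc hne
        refine ⟨⋃₀ c, ⟨?_, ?_⟩, fun s hs => Set.subset_sUnion_of_mem hs⟩
        · rcases hne with ⟨t, ht⟩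
          exact (hcS ht).1.trans (Set.subset_sUnion_of_mem ht)
        · intro hd
          rcases CompletenessProof.deriv_sUnion hc hne hd with ⟨t, ht, hdt⟩
          exact (hcS ht).2 hdt)
      Γ ⟨subset_rfl, hna⟩
  have hnA : ¬ SDeriv G A := hGS.1.2
  have hout : ∀ B, B ∉ G → SDeriv G (B.sup A) := by
    intro B hB
    have hd : SDeriv (insert B G) A := by
      by_contra hnd
      have hmem : insert B G ∈ {Δ : Set Formula | Γ ⊆ Δ ∧ ¬ SDeriv Δ A} :=
        ⟨hΓG.trans (Set.subset_insert B G), hnd⟩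
      exact hB (hGS.2 hmem (Set.subset_insert B G) (Set.mem_insert B G))
    exact CompletenessProof.dedSup hd
  have hGc : ∀ B, SDeriv G B → B ∈ G := by
    intro B hB
    by_contra hBn
    exact hnA (.mp hB (hout B hBn))
  have hGprime : ∀ B C : Formula, B.or C ∈ G → B ∈ G ∨ C ∈ G := by
    intro B C hBC
    by_contra hcon
    push_neg at hcon
    have h1 := hout B hcon.1
    have h2 := hout C hcon.2
    exact hnA (.mp (.hyp hBC)
      (CompletenessProof.mpImp (CompletenessProof.mpImp (.axM6 B C A) h1) h2))
  have hGsup : ∀ B C : Formula, B ∈ G ∨ B.sup C ∈ G := by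
    intro B C
    by_contra hcon
    push_neg at hcon
    have h1 := hout B hcon.1
    have h2 := hout (B.sup C) hcon.2
    exact hnA (CompletenessProof.mpImp (CompletenessProof.mpImp (.axM5 B C A) h2) h1)
  have hDD : ∀ X, CompletenessProof.DD G G X → SDeriv G X := by
    intro X hX
    induction hX with
    | hyp h => exact .hyp h
    | mpI _ _ ih1 ih2 => exact CompletenessProof.mpImp ih2 ih1
    | mpS hA _ ih => exact .mp (.hyp hA) ih
  have hGworld : CompletenessProof.IsWorld G G :=
    ⟨subset_rfl, fun B hB => hGc B (hDD B hB), hGprime⟩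
  -- Evaluate the semantic hypothesis in the canonical model
  have hsat : (CompletenessProof.canonModel G hGworld).sat A
      (CompletenessProof.canonModel G hGworld).g := by
    refine h _ ?_
    intro B hB
    exact (CompletenessProof.truth_lemma hGc hGworld hGsup B ⟨G, hGworld⟩).2 (hΓG hB)
  have : A ∈ G :=
    (CompletenessProof.truth_lemma hGc hGworld hGsup A ⟨G, hGworld⟩).1 hsat
  exact hnA (.hyp this)
end

section
/- The following formulas are provable in the Hilbert system S for all formulas A, B, C of L⊃: (Ex) (A⊃(B⊃C))→(B⊃(A⊃C)), and (Pfix) (B→C)→((A⊃B)→(A⊃C)). -/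
namespace SDeriv

/-- modus ponens for the intuitionistic conditional, via AxM1 and (MP). -/
lemma mpi {Γ} {A B : Formula} (h1 : SDeriv Γ A) (h2 : SDeriv Γ (A.imp B)) :
    SDeriv Γ B :=
  mp h1 (mp h2 (axM1 A B))

/-- A → A. -/
lemma impId {Γ} (A : Formula) : SDeriv Γ (A.imp A) :=
  mpi (ax1 A A) (mpi (ax1 A (A.imp A)) (ax2 A (A.imp A) A))

/-- weakening by an → antecedent. -/
lemma kimp {Γ} {B : Formula} (A : Formula) (h : SDeriv Γ B) :
    SDeriv Γ (A.imp B) :=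
  mpi h (ax1 B A)

/-- from A→B and B→C, infer A→C. -/
lemma comp {Γ} {A B C : Formula} (h1 : SDeriv Γ (A.imp B))
    (h2 : SDeriv Γ (B.imp C)) : SDeriv Γ (A.imp C) :=
  mpi h1 (mpi (kimp A h2) (ax2 A B C))

/-- from A→(B→C), infer B→(A→C). -/
lemma perm {Γ} {A B C : Formula} (h : SDeriv Γ (A.imp (B.imp C))) :
    SDeriv Γ (B.imp (A.imp C)) :=
  comp (ax1 B A) (mpi h (ax2 A B C))

/-- a derivable → is a derivable ⊃. -/
lemma supify {Γ} {A B : Formula} (h : SDeriv Γ (A.imp B)) :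
    SDeriv Γ (A.sup B) :=
  mp h (axM1 A B)

/-- weakening by a ⊃ antecedent. -/
lemma ksup {Γ} {B : Formula} (A : Formula) (h : SDeriv Γ B) :
    SDeriv Γ (A.sup B) :=
  supify (kimp A h)

/-- Deduction theorem for the classical conditional ⊃. -/
lemma dt {Γ : Set Formula} {A B : Formula}
    (h : SDeriv (insert A Γ) B) : SDeriv Γ (A.sup B) := by
  have main : ∀ (Δ : Set Formula) (X : Formula), SDeriv Δ X →
      ∀ (Γ' : Set Formula) (A' : Formula), Δ = insert A' Γ' →
        SDeriv Γ' (A'.sup X) := by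
    intro Δ X h
    induction h with
    | hyp hm =>
        rename_i X'
        intro Γ' A' hΔ
        subst hΔ
        rcases Set.mem_insert_iff.1 hm with rfl | hm'
        · exact supify (impId X')
        · exact ksup A' (hyp hm')
    | ax1 X Y => exact fun Γ' A' _ => ksup A' (ax1 X Y)
    | ax2 X Y Z => exact fun Γ' A' _ => ksup A' (ax2 X Y Z)
    | ax3 X Y => exact fun Γ' A' _ => ksup A' (ax3 X Y)
    | ax4 X Y => exact fun Γ' A' _ => ksup A' (ax4 X Y)
    | ax5 X Y Z => exact fun Γ' A' _ => ksup A' (ax5 X Y Z)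
    | ax6 X Y => exact fun Γ' A' _ => ksup A' (ax6 X Y)
    | ax7 X Y => exact fun Γ' A' _ => ksup A' (ax7 X Y)
    | ax8 X Y Z => exact fun Γ' A' _ => ksup A' (ax8 X Y Z)
    | axM1 X Y => exact fun Γ' A' _ => ksup A' (axM1 X Y)
    | axM2 X Y Z => exact fun Γ' A' _ => ksup A' (axM2 X Y Z)
    | axM3 X Y Z => exact fun Γ' A' _ => ksup A' (axM3 X Y Z)
    | axM4 X Y Z => exact fun Γ' A' _ => ksup A' (axM4 X Y Z)
    | axM5 X Y Z => exact fun Γ' A' _ => ksup A' (axM5 X Y Z)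
    | axM6 X Y Z => exact fun Γ' A' _ => ksup A' (axM6 X Y Z)
    | @mp X Y _ _ ih1 ih2 =>
        intro Γ' A' hΔ
        exact mp (ih1 Γ' A' hΔ) (mpi (ih2 Γ' A' hΔ) (axM2 A' X Y))
  exact main (insert A Γ) B h Γ A rfl

/-- Θ : P ⊃ ((x→(P⊃c)) → (x→c)), by applying AxM4 to itself. -/
lemma theta {Γ} (P x c : Formula) :
    SDeriv Γ (P.sup ((x.imp (P.sup c)).imp (x.imp c))) :=
  mpi (axM4 x P c) (axM4 (x.imp (P.sup c)) P (x.imp c))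

/-- In a context where P is derivable: (x→(P⊃c)) → (x→c). -/
lemma omega {Γ} {P : Formula} (x c : Formula) (h : SDeriv Γ P) :
    SDeriv Γ ((x.imp (P.sup c)).imp (x.imp c)) :=
  mp h (theta P x c)

/-- mpi-form of AxM3 : from A⊃(B→C) infer B→(A⊃C). -/
lemma axm3i {Γ} {A B C : Formula} (h : SDeriv Γ (A.sup (B.imp C))) :
    SDeriv Γ (B.imp (A.sup C)) :=
  mpi h (axM3 A B C)

end SDeriv

open SDeriv in
/-- (Ex) and (Pfix) are provable in S. -/
theorem ex_and_pfix :
    (∀ A B C : Formula,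
      SDeriv ∅ ((A.sup (B.sup C)).imp (B.sup (A.sup C)))) ∧
    (∀ A B C : Formula,
      SDeriv ∅ ((B.imp C).imp ((A.sup B).imp (A.sup C)))) := by
  constructor
  · -- (Ex)
    intro A B C
    set H := A.sup (B.sup C) with hH
    -- work in the context {A, B}
    have hA : SDeriv (insert A (insert B (∅ : Set Formula))) A :=
      hyp (Set.mem_insert _ _)
    have hB : SDeriv (insert A (insert B (∅ : Set Formula))) B :=
      hyp (Set.mem_insert_of_mem _ (Set.mem_insert _ _))
    -- H → H, then strip the guards A and B pointwise using Θ
    have s1 : SDeriv (insert A (insert B (∅ : Set Formula)))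
        (H.imp (B.sup C)) :=
      mpi (impId H) (omega H (B.sup C) hA)
    have s2 : SDeriv (insert A (insert B (∅ : Set Formula))) (H.imp C) :=
      mpi s1 (omega H C hB)
    -- discharge A, shuttle it inside with AxM3
    have s3 : SDeriv (insert B (∅ : Set Formula)) (H.imp (A.sup C)) :=
      axm3i (dt s2)
    -- discharge B, shuttle it inside with AxM3
    exact axm3i (dt s3)
  · -- (Pfix)
    intro A B C
    -- in context {A} : (A⊃B) → B
    have hA : SDeriv (insert A (∅ : Set Formula)) A := hyp (Set.mem_insert _ _)
    have p1 : SDeriv (insert A (∅ : Set Formula)) ((A.sup B).imp B) :=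
      mpi (impId (A.sup B)) (omega (A.sup B) B hA)
    -- B → ((B→C)→C)
    have star : SDeriv (insert A (∅ : Set Formula))
        (B.imp ((B.imp C).imp C)) :=
      perm (impId (B.imp C))
    have p2 : SDeriv (insert A (∅ : Set Formula))
        ((A.sup B).imp ((B.imp C).imp C)) := comp p1 star
    -- discharge A and shuttle
    have p4 : SDeriv (∅ : Set Formula)
        ((A.sup B).imp (A.sup ((B.imp C).imp C))) := axm3i (dt p2)
    have p6 : SDeriv (∅ : Set Formula)
        ((A.sup B).imp ((B.imp C).imp (A.sup C))) :=
      comp p4 (axM3 A (B.imp C) C)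
    exact perm p6
end
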